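/- arXiv:2601.13808 — 2 statements merged into one kernel-verified Lean document; each statement's English description precedes it below -/
import Mathlib

section
/- A Lie group, in particular GL(n, ℂ), has no small subgroups: there exists an open neighborhood U of the identity such that the only subgroup of GL(n, ℂ) contained in U is the trivial subgroup. -/
attribute [local instance] Matrix.linftyOpNormedRing Matrix.linftyOpNormedAlgebra

/-- Key inequality: if `‖A‖ ≤ 1/2` then `‖(1+A)^2 - 1‖ ≥ (3/2)‖A‖`. -/
private lemma key_ineq {n : ℕ} (A : Matrix (Fin n) (Fin n) ℂ) (hA : ‖A‖ ≤ 1/2) :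
    (3/2) * ‖A‖ ≤ ‖(1 + A)^2 - 1‖ := by
  have hid : A + A = ((1 + A)^2 - 1) - A * A := by noncomm_ring
  have h1 : ‖A + A‖ ≤ ‖(1 + A)^2 - 1‖ + ‖A * A‖ := by
    rw [hid]; exact norm_sub_le _ _
  have h2 : ‖A + A‖ = 2 * ‖A‖ := by
    rw [← two_smul ℝ A, norm_smul]; simp
  have h3 : ‖A * A‖ ≤ ‖A‖ * ‖A‖ := norm_mul_le _ _
  nlinarith [norm_nonneg A]

/-- `GL(n, ℂ)` has no small subgroups: there is an open neighbourhood `U` of the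
identity such that the only subgroup of `GL(n, ℂ)` contained in `U` is trivial. -/
theorem GL_no_small_subgroups (n : ℕ) :
    ∃ U : Set (GL (Fin n) ℂ), IsOpen U ∧ (1 : GL (Fin n) ℂ) ∈ U ∧
      ∀ H : Subgroup (GL (Fin n) ℂ), (H : Set (GL (Fin n) ℂ)) ⊆ U → H = ⊥ := by
  refine ⟨(fun g : GL (Fin n) ℂ => (g : Matrix (Fin n) (Fin n) ℂ)) ⁻¹' Metric.ball 1 (1/2),
    Metric.isOpen_ball.preimage Units.continuous_val, by simp, ?_⟩
  intro H hH
  rw [Subgroup.eq_bot_iff_forall]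
  intro g hg
  -- norm of powers of g stay < 1/2 away from 1
  have hU : ∀ h : GL (Fin n) ℂ, h ∈ H → ‖(h : Matrix (Fin n) (Fin n) ℂ) - 1‖ < 1/2 := by
    intro h hh
    have := hH hh
    simpa [Metric.mem_ball, dist_eq_norm] using this
  set t := ‖(g : Matrix (Fin n) (Fin n) ℂ) - 1‖ with ht
  -- by induction, ‖g^(2^k) - 1‖ ≥ (3/2)^k * t
  have key : ∀ k : ℕ, (3/2 : ℝ)^k * t ≤ ‖((g^(2^k) : GL (Fin n) ℂ) : Matrix (Fin n) (Fin n) ℂ) - 1‖ := by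
    intro k
    induction k with
    | zero => simp; exact ht.le
    | succ k ih =>
      have hmem : g ^ (2^k) ∈ H := H.pow_mem hg _
      set h := g ^ (2^k) with hh
      have hlt : ‖(h : Matrix (Fin n) (Fin n) ℂ) - 1‖ ≤ 1/2 := (hU h hmem).le
      set A : Matrix (Fin n) (Fin n) ℂ := (h : Matrix (Fin n) (Fin n) ℂ) - 1 with hA
      have h2 : ((g ^ 2^(k+1) : GL (Fin n) ℂ) : Matrix (Fin n) (Fin n) ℂ) = (1 + A)^2 := by
        have : g ^ 2^(k+1) = h^2 := by rw [hh, ← pow_mul, pow_succ]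
        rw [this]
        push_cast
        rw [hA]; noncomm_ring
      calc (3/2:ℝ)^(k+1) * t = (3/2) * ((3/2)^k * t) := by ring
        _ ≤ (3/2) * ‖A‖ := by
            have := key_ineq A hlt
            nlinarith [ih]
        _ ≤ ‖(1 + A)^2 - 1‖ := key_ineq A hlt
        _ = _ := by rw [h2]
  -- conclude t = 0
  have ht0 : t ≤ 0 := by
    by_contra hpos
    push_neg at hpos
    obtain ⟨k, hk⟩ := pow_unbounded_of_one_lt (1/(2*t) : ℝ) (by norm_num : (1:ℝ) < 3/2)
    have hlt := hU _ (H.pow_mem hg (2^k))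
    have := key k
    have h1 : (3/2:ℝ)^k * t < 1/2 := lt_of_le_of_lt this hlt
    rw [div_lt_iff₀ (by positivity)] at hk
    nlinarith
  have : (g : Matrix (Fin n) (Fin n) ℂ) - 1 = 0 :=
    norm_le_zero_iff.mp ht0
  ext
  rw [sub_eq_zero] at this
  simp [this]
end

section
/- For every odd prime p, the subgroup N = { L(1,0,c,d,1) : c, d ∈ ℤ/pℤ } is a normal Sylow p-subgroup of G_p isomorphic to (ℤ/pℤ) × (ℤ/pℤ), and G_p is isomorphic to the semidirect product (ℤ/pℤ)² ⋊ D_{p+1}, where D_{p+1} is the dihedral group of order 2(p+1). -/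
open Matrix
set_option linter.unusedSectionVars false
set_option maxHeartbeats 1600000

namespace GpAux

variable {p : ℕ} [Fact p.Prime] {v : ZMod p}

/-- the norm-one group -/
def NormOne (p : ℕ) (v : ZMod p) : Type := {x : ZMod p × ZMod p // x.1 ^ 2 - v * x.2 ^ 2 = 1}

namespace NormOne

instance : Mul (NormOne p v) :=
  ⟨fun x y => ⟨(x.1.1 * y.1.1 + v * x.1.2 * y.1.2, x.1.1 * y.1.2 + x.1.2 * y.1.1), by
    have hx := x.2; have hy := y.2
    linear_combination (y.1.1 ^ 2 - v * y.1.2 ^ 2) * hx + hy⟩⟩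

instance : One (NormOne p v) := ⟨⟨(1, 0), by norm_num⟩⟩

instance : Inv (NormOne p v) :=
  ⟨fun x => ⟨(x.1.1, -x.1.2), by have hx := x.2; linear_combination hx⟩⟩

@[simp] lemma mul_fst (x y : NormOne p v) :
    (x * y).1.1 = x.1.1 * y.1.1 + v * x.1.2 * y.1.2 := rfl
@[simp] lemma mul_snd (x y : NormOne p v) :
    (x * y).1.2 = x.1.1 * y.1.2 + x.1.2 * y.1.1 := rfl
@[simp] lemma one_fst : (1 : NormOne p v).1.1 = 1 := rfl
@[simp] lemma one_snd : (1 : NormOne p v).1.2 = 0 := rfl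
@[simp] lemma inv_fst (x : NormOne p v) : (x⁻¹).1.1 = x.1.1 := rfl
@[simp] lemma inv_snd (x : NormOne p v) : (x⁻¹).1.2 = -x.1.2 := rfl

@[ext] lemma ext {x y : NormOne p v} (h1 : x.1.1 = y.1.1) (h2 : x.1.2 = y.1.2) : x = y :=
  Subtype.ext (Prod.ext h1 h2)

instance : Group (NormOne p v) where
  mul_assoc x y z := by ext <;> simp <;> ring
  one_mul x := by ext <;> simp
  mul_one x := by ext <;> simp
  inv_mul_cancel x := by
    have hx := x.2
    ext <;> simp
    · linear_combination hx
    · ring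

instance : Fintype (NormOne p v) := Subtype.fintype _

end NormOne


lemma two_ne_zero (hp : Odd p) : (2 : ZMod p) ≠ 0 := by
  have : ((2 : ℕ) : ZMod p) ≠ 0 := by
    rw [Ne, ZMod.natCast_eq_zero_iff]
    intro h
    have := (Nat.prime_dvd_prime_iff_eq Fact.out Nat.prime_two).mp h
    subst this
    exact (Nat.not_odd_iff_even.mpr even_two) hp
  simpa using this

lemma v_ne_zero (hv : ¬ IsSquare v) : v ≠ 0 := fun h => hv ⟨0, by simp [h]⟩

lemma denom_ne (hv : ¬ IsSquare v) (t : ZMod p) : 1 - v * t ^ 2 ≠ 0 := by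
  intro h
  rcases eq_or_ne t 0 with rfl | ht
  · simp at h
  · exact hv ⟨t⁻¹, by field_simp; linear_combination -h⟩



end GpAux
section
set_option linter.unusedSectionVars false
namespace GpAux
variable {p : ℕ} [Fact p.Prime] {v : ZMod p}

noncomputable def stereo (hp : Odd p) (hv : ¬ IsSquare v) : Option (ZMod p) ≃ NormOne p v where
  toFun o := o.casesOn ⟨(-1, 0), by norm_num⟩ (fun t =>
    ⟨((1 + v * t ^ 2) / (1 - v * t ^ 2), 2 * t / (1 - v * t ^ 2)), by
      have h := denom_ne hv t
      field_simp
      ring⟩)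
  invFun x := if x.1.1 = -1 then none else some (x.1.2 / (x.1.1 + 1))
  left_inv o := by
    rcases o with _ | t
    · simp
    · have h := denom_ne hv t
      have h2 := two_ne_zero hp
      have hne : (1 + v * t ^ 2) / (1 - v * t ^ 2) ≠ -1 := by
        intro hc
        rw [div_eq_iff h] at hc
        apply h2
        linear_combination hc
      simp only [hne, if_false, Option.some.injEq]
      have key : (1 + v * t ^ 2) / (1 - v * t ^ 2) + 1 = 2 / (1 - v * t ^ 2) := by
        field_simp
        ring
      rw [key, div_div_div_eq]
      rw [div_eq_iff (by exact mul_ne_zero h h2)]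
      ring
  right_inv x := by
    obtain ⟨⟨a, b⟩, hx⟩ := x
    simp only at hx
    by_cases ha : a = -1
    · subst ha
      have hb : b = 0 := by
        have hv0 := v_ne_zero hv
        have : v * b ^ 2 = 0 := by linear_combination -hx
        rcases mul_eq_zero.mp this with h | h
        · exact absurd h hv0
        · exact pow_eq_zero_iff (n := 2) (by norm_num) |>.mp h
      subst hb
      simp only [if_pos rfl]
      rfl
    · have h2 := two_ne_zero hp
      have ha1 : a + 1 ≠ 0 := fun hc => ha (by linear_combination hc)
      have ha1' : (1 : ZMod p) + a ≠ 0 := fun hc => ha (by linear_combination hc)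
      simp only [ha, if_false]
      have key : 1 - v * (b / (a + 1)) ^ 2 = 2 / (a + 1) := by
        field_simp
        linear_combination hx
      have hd := denom_ne hv (b / (a + 1))
      ext
      · show (1 + v * (b / (a + 1)) ^ 2) / (1 - v * (b / (a + 1)) ^ 2) = a
        rw [key]
        rw [div_eq_iff (by simpa [key] using hd)]
        field_simp
        linear_combination -hx
      · show 2 * (b / (a + 1)) / (1 - v * (b / (a + 1)) ^ 2) = b
        rw [key]
        rw [div_eq_iff (by simpa [key] using hd)]
        field_simp

lemma card_normOne (hp : Odd p) (hv : ¬ IsSquare v) :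
    Nat.card (NormOne p v) = p + 1 := by
  rw [Nat.card_eq_fintype_card, ← Fintype.card_congr (stereo hp hv)]
  simp [ZMod.card]

end GpAux
end
section
set_option linter.unusedSectionVars false
set_option maxHeartbeats 1000000
namespace GpAux
variable {p : ℕ} [Fact p.Prime] {v : ZMod p}

def Lmat (v a b c d s : ZMod p) : Matrix (Fin 3) (Fin 3) (ZMod p) :=
  !![a, s * v * b, 0; b, s * a, 0; c, d, s]

lemma Lmat_one : Lmat v 1 0 0 0 1 = 1 := by
  rw [Lmat, Matrix.one_fin_three]
  norm_num

lemma Lmat_mul {s : ZMod p} (hs : s = 1 ∨ s = -1) (a b c d a' b' c' d' s' : ZMod p) :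
    Lmat v a b c d s * Lmat v a' b' c' d' s' =
      Lmat v (a * a' + s * v * b * b') (a' * b + s * a * b')
        (a' * c + b' * d + s * c') (s' * (v * b' * c + a' * d) + s * d') (s * s') := by
  rcases hs with rfl | rfl <;>
  · rw [Lmat, Lmat, Lmat, Matrix.mul_fin_three]
    ext i j
    fin_cases i <;> fin_cases j <;> simp <;> ring_nf

lemma Lmat_mul_inv {a b s : ZMod p} (ha : a ^ 2 - v * b ^ 2 = 1) (hs : s = 1 ∨ s = -1)
    (c d : ZMod p) :
    Lmat v a b c d s * Lmat v a (-(s * b)) (b * d - s * a * c) (s * v * b * c - a * d) s = 1 := by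
  rcases hs with rfl | rfl <;>
  · rw [Lmat, Lmat, Matrix.mul_fin_three, Matrix.one_fin_three]
    ext i j
    fin_cases i <;> fin_cases j <;> simp [Matrix.vecHead, Matrix.vecTail] <;> first | ring1 | linear_combination ha

end GpAux
end
section
set_option linter.unusedSectionVars false
set_option maxHeartbeats 1000000
namespace GpAux
variable {p : ℕ} [Fact p.Prime] {v : ZMod p}

lemma Lmat_inv_mul {a b s : ZMod p} (ha : a ^ 2 - v * b ^ 2 = 1) (hs : s = 1 ∨ s = -1)
    (c d : ZMod p) :
    Lmat v a (-(s * b)) (b * d - s * a * c) (s * v * b * c - a * d) s * Lmat v a b c d s = 1 := by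
  rcases hs with rfl | rfl <;>
  · rw [Lmat, Lmat, Matrix.mul_fin_three, Matrix.one_fin_three]
    ext i j
    fin_cases i <;> fin_cases j <;> simp [Matrix.vecHead, Matrix.vecTail] <;>
      first
      | ring1
      | linear_combination ha
      | linear_combination (-(c + d)) * ha
      | linear_combination (-2 * d) * ha
      | linear_combination (2 * d) * ha
      | linear_combination (c + d) * ha
      | linear_combination c * ha
      | linear_combination d * ha
      | linear_combination (-c) * ha
      | linear_combination (-d) * ha
      | linear_combination (-2 * c) * ha
      | linear_combination (2 * c) * ha
      | linear_combination (c - d) * ha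
      | linear_combination (d - c) * ha

/-- the group element `L(a,b,c,d,s)` -/
def Lgl (v a b c d : ZMod p) {s : ZMod p} (ha : a ^ 2 - v * b ^ 2 = 1)
    (hs : s = 1 ∨ s = -1) : GL (Fin 3) (ZMod p) :=
  ⟨Lmat v a b c d s, Lmat v a (-(s * b)) (b * d - s * a * c) (s * v * b * c - a * d) s,
    Lmat_mul_inv ha hs c d, Lmat_inv_mul ha hs c d⟩

@[simp] lemma Lgl_val (v a b c d : ZMod p) {s : ZMod p} (ha : a ^ 2 - v * b ^ 2 = 1)
    (hs : s = 1 ∨ s = -1) : (Lgl v a b c d ha hs : Matrix (Fin 3) (Fin 3) (ZMod p)) =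
      Lmat v a b c d s := rfl

lemma Lgl_inv_val (v a b c d : ZMod p) {s : ZMod p} (ha : a ^ 2 - v * b ^ 2 = 1)
    (hs : s = 1 ∨ s = -1) : ((Lgl v a b c d ha hs)⁻¹ : GL (Fin 3) (ZMod p)) =
      (Lmat v a (-(s * b)) (b * d - s * a * c) (s * v * b * c - a * d) s
        : Matrix (Fin 3) (Fin 3) (ZMod p)) := rfl

/-- The group `G_p` as a subgroup of `GL₃(ℤ/p)`. -/
def Gp (p : ℕ) [Fact p.Prime] (v : ZMod p) : Subgroup (GL (Fin 3) (ZMod p)) where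
  carrier := {L | ∃ a b c d s : ZMod p, a ^ 2 - v * b ^ 2 = 1 ∧ (s = 1 ∨ s = -1) ∧
    (L : Matrix (Fin 3) (Fin 3) (ZMod p)) = !![a, s * v * b, 0; b, s * a, 0; c, d, s]}
  one_mem' := ⟨1, 0, 0, 0, 1, by norm_num, Or.inl rfl, by
    show ((1 : GL (Fin 3) (ZMod p)) : Matrix (Fin 3) (Fin 3) (ZMod p)) = _
    rw [Units.val_one, Matrix.one_fin_three]; norm_num⟩
  mul_mem' := by
    rintro x y ⟨a, b, c, d, s, ha, hs, hx⟩ ⟨a', b', c', d', s', ha', hs', hy⟩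
    refine ⟨a * a' + s * v * b * b', a' * b + s * a * b',
      a' * c + b' * d + s * c', s' * (v * b' * c + a' * d) + s * d', s * s', ?_, ?_, ?_⟩
    · rcases hs with rfl | rfl <;>
        linear_combination (norm := ring_nf) (a' ^ 2 - v * b' ^ 2) * ha + ha'
    · rcases hs with rfl | rfl <;> rcases hs' with rfl | rfl <;> norm_num
    · show ((x * y : GL _ _) : Matrix (Fin 3) (Fin 3) (ZMod p)) = _
      rw [Units.val_mul, hx, hy]
      exact Lmat_mul hs a b c d a' b' c' d' s'
  inv_mem' := by
    rintro x ⟨a, b, c, d, s, ha, hs, hx⟩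
    refine ⟨a, -(s * b), b * d - s * a * c, s * v * b * c - a * d, s, ?_, hs, ?_⟩
    · rcases hs with rfl | rfl <;> linear_combination (norm := ring_nf) ha
    · show ((x⁻¹ : GL _ _) : Matrix (Fin 3) (Fin 3) (ZMod p)) = _
      exact Units.inv_eq_of_mul_eq_one_right (by rw [hx]; exact Lmat_mul_inv ha hs c d)

end GpAux
end
section
set_option linter.unusedSectionVars false
set_option maxHeartbeats 1000000
namespace GpAux
variable {p : ℕ} [Fact p.Prime] {v : ZMod p}

lemma Lmat_congr {a b c d s a' b' c' d' s' : ZMod p} (e1 : a = a') (e2 : b = b') (e3 : c = c')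
    (e4 : d = d') (e5 : s = s') : Lmat v a b c d s = Lmat v a' b' c' d' s' := by
  subst e1 e2 e3 e4 e5; rfl

lemma Gp_ext {x y : Gp p v}
    (h : ((x : GL (Fin 3) (ZMod p)) : Matrix (Fin 3) (Fin 3) (ZMod p)) =
      ((y : GL (Fin 3) (ZMod p)) : Matrix (Fin 3) (Fin 3) (ZMod p))) : x = y :=
  Subtype.ext (Units.ext h)

lemma Gp_mul_val (x y : Gp p v) :
    (((x * y : Gp p v) : GL (Fin 3) (ZMod p)) : Matrix (Fin 3) (Fin 3) (ZMod p)) =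
      ((x : GL (Fin 3) (ZMod p)) : Matrix (Fin 3) (Fin 3) (ZMod p)) *
      ((y : GL (Fin 3) (ZMod p)) : Matrix (Fin 3) (Fin 3) (ZMod p)) := rfl

/-- the translation part `L(1,0,c,d,1)` as a hom from `(ℤ/p)²`. -/
def translHom : Multiplicative (ZMod p × ZMod p) →* Gp p v where
  toFun m := ⟨Lgl v 1 0 m.toAdd.1 m.toAdd.2 (by norm_num) (Or.inl rfl),
    ⟨1, 0, m.toAdd.1, m.toAdd.2, 1, by norm_num, Or.inl rfl, rfl⟩⟩
  map_one' := by
    apply Gp_ext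
    show Lmat v 1 0 0 0 1 = _
    rw [Lmat_one]; rfl
  map_mul' x y := by
    apply Gp_ext
    rw [Gp_mul_val]
    show Lmat v 1 0 _ _ 1 = Lmat v 1 0 _ _ 1 * Lmat v 1 0 _ _ 1
    rw [Lmat_mul (Or.inl rfl)]
    exact Lmat_congr (by ring) (by ring) (by simp) (by simp) (by ring)

@[simp] lemma translHom_val (m : Multiplicative (ZMod p × ZMod p)) :
    (((translHom m : Gp p v) : GL (Fin 3) (ZMod p)) : Matrix (Fin 3) (Fin 3) (ZMod p)) =
      Lmat v 1 0 m.toAdd.1 m.toAdd.2 1 := rfl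

/-- the rotation part `L(a,b,0,0,1)` as a hom from the norm-one group. -/
def rotHom : NormOne p v →* Gp p v where
  toFun u := ⟨Lgl v u.1.1 u.1.2 0 0 u.2 (Or.inl rfl),
    ⟨u.1.1, u.1.2, 0, 0, 1, u.2, Or.inl rfl, rfl⟩⟩
  map_one' := by
    apply Gp_ext
    show Lmat v 1 0 0 0 1 = _
    rw [Lmat_one]; rfl
  map_mul' x y := by
    apply Gp_ext
    rw [Gp_mul_val]
    show Lmat v _ _ 0 0 1 = Lmat v _ _ 0 0 1 * Lmat v _ _ 0 0 1
    rw [Lmat_mul (Or.inl rfl)]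
    exact Lmat_congr (by simp; try ring) (by simp; try ring) (by ring) (by ring) (by ring)

@[simp] lemma rotHom_val (u : NormOne p v) :
    (((rotHom u : Gp p v) : GL (Fin 3) (ZMod p)) : Matrix (Fin 3) (Fin 3) (ZMod p)) =
      Lmat v u.1.1 u.1.2 0 0 1 := rfl

/-- the reflection `L(1,0,0,0,-1)`. -/
def reflG : Gp p v :=
  ⟨Lgl v 1 0 0 0 (s := -1) (by norm_num) (Or.inr rfl),
    ⟨1, 0, 0, 0, -1, by norm_num, Or.inr rfl, rfl⟩⟩

@[simp] lemma reflG_val :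
    (((reflG : Gp p v) : GL (Fin 3) (ZMod p)) : Matrix (Fin 3) (Fin 3) (ZMod p)) =
      Lmat v 1 0 0 0 (-1) := rfl

lemma reflG_mul_self : (reflG : Gp p v) * reflG = 1 := by
  apply Gp_ext
  rw [Gp_mul_val, reflG_val, Lmat_mul (Or.inr rfl)]
  show _ = (1 : Matrix (Fin 3) (Fin 3) (ZMod p))
  rw [← Lmat_one]
  exact Lmat_congr (by ring) (by ring) (by ring) (by ring) (by ring)

lemma reflG_rot_reflG (u : NormOne p v) :
    (reflG : Gp p v) * rotHom u * reflG = rotHom u⁻¹ := by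
  apply Gp_ext
  rw [Gp_mul_val, Gp_mul_val, reflG_val, rotHom_val, rotHom_val,
    Lmat_mul (Or.inr rfl), Lmat_mul (by right; norm_num)]
  exact Lmat_congr (by simp; try ring) (by simp; try ring) (by ring) (by ring) (by norm_num)

end GpAux
end
section
set_option linter.unusedSectionVars false
set_option maxHeartbeats 1000000
namespace GpAux
variable {p : ℕ} [Fact p.Prime] {v : ZMod p}

lemma mequiv_ext {x y : Multiplicative (ZMod p × ZMod p)}
    (h1 : x.toAdd.1 = y.toAdd.1) (h2 : x.toAdd.2 = y.toAdd.2) : x = y :=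
  Prod.ext h1 h2

/-- the additive map `(c,d) ↦ (a c - b d, a d - v b c)` for `u = (a,b)` of norm one. -/
def muAddAux (u : NormOne p v) : ZMod p × ZMod p →+ ZMod p × ZMod p where
  toFun m := (u.1.1 * m.1 - u.1.2 * m.2, u.1.1 * m.2 - v * u.1.2 * m.1)
  map_zero' := by simp
  map_add' x y := by refine Prod.ext ?_ ?_ <;> simp <;> ring

@[simp] lemma muAddAux_fst (u : NormOne p v) (m : ZMod p × ZMod p) :
    (muAddAux u m).1 = u.1.1 * m.1 - u.1.2 * m.2 := rfl
@[simp] lemma muAddAux_snd (u : NormOne p v) (m : ZMod p × ZMod p) :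
    (muAddAux u m).2 = u.1.1 * m.2 - v * u.1.2 * m.1 := rfl

lemma muAddAux_comp (x y : NormOne p v) (m : ZMod p × ZMod p) :
    muAddAux x (muAddAux y m) = muAddAux (x * y) m := by
  refine Prod.ext ?_ ?_ <;> simp <;> ring

lemma muAddAux_one (m : ZMod p × ZMod p) : muAddAux (1 : NormOne p v) m = m := by
  refine Prod.ext ?_ ?_ <;> simp

/-- the action of the norm-one group on `(ℤ/p)²`. -/
def mu : NormOne p v →* MulAut (Multiplicative (ZMod p × ZMod p)) where
  toFun u :=
    { toFun := fun m => Multiplicative.ofAdd (muAddAux u m.toAdd)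
      invFun := fun m => Multiplicative.ofAdd (muAddAux u⁻¹ m.toAdd)
      left_inv := fun m => by
        show Multiplicative.ofAdd (muAddAux u⁻¹ (muAddAux u m.toAdd)) = m
        rw [muAddAux_comp, inv_mul_cancel, muAddAux_one]
        rfl
      right_inv := fun m => by
        show Multiplicative.ofAdd (muAddAux u (muAddAux u⁻¹ m.toAdd)) = m
        rw [muAddAux_comp, mul_inv_cancel, muAddAux_one]
        rfl
      map_mul' := fun x y => by
        refine mequiv_ext ?_ ?_ <;> simp <;> ring }
  map_one' := by
    refine MulEquiv.ext fun m => ?_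
    show Multiplicative.ofAdd (muAddAux 1 m.toAdd) = m
    rw [muAddAux_one]
    rfl
  map_mul' x y := by
    refine MulEquiv.ext fun m => ?_
    show Multiplicative.ofAdd (muAddAux (x * y) m.toAdd) = _
    rw [← muAddAux_comp]
    rfl

@[simp] lemma mu_apply_fst (u : NormOne p v) (m : Multiplicative (ZMod p × ZMod p)) :
    ((mu u m).toAdd).1 = u.1.1 * m.toAdd.1 - u.1.2 * m.toAdd.2 := rfl
@[simp] lemma mu_apply_snd (u : NormOne p v) (m : Multiplicative (ZMod p × ZMod p)) :
    ((mu u m).toAdd).2 = u.1.1 * m.toAdd.2 - v * u.1.2 * m.toAdd.1 := rfl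

/-- the reflection automorphism `(c,d) ↦ (-c, d)`. -/
def sigmaAut : MulAut (Multiplicative (ZMod p × ZMod p)) where
  toFun m := Multiplicative.ofAdd (-m.toAdd.1, m.toAdd.2)
  invFun m := Multiplicative.ofAdd (-m.toAdd.1, m.toAdd.2)
  left_inv m := by refine mequiv_ext ?_ ?_ <;> simp
  right_inv m := by refine mequiv_ext ?_ ?_ <;> simp
  map_mul' x y := by refine mequiv_ext ?_ ?_ <;> simp [add_comm]

@[simp] lemma sigmaAut_apply_fst (m : Multiplicative (ZMod p × ZMod p)) :
    ((sigmaAut (p := p) m).toAdd).1 = -m.toAdd.1 := rfl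
@[simp] lemma sigmaAut_apply_snd (m : Multiplicative (ZMod p × ZMod p)) :
    ((sigmaAut (p := p) m).toAdd).2 = m.toAdd.2 := rfl

lemma sigmaAut_sq : (sigmaAut (p := p)) * sigmaAut = 1 := by
  refine MulEquiv.ext fun m => ?_
  refine mequiv_ext ?_ ?_ <;> simp

lemma sigmaAut_mu_sigmaAut (u : NormOne p v) :
    sigmaAut * mu u * sigmaAut = mu u⁻¹ := by
  refine MulEquiv.ext fun m => ?_
  refine mequiv_ext ?_ ?_ <;>
    simp [MulAut.mul_apply, -map_inv] <;> ring

end GpAux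
end
section
set_option linter.unusedSectionVars false
set_option maxHeartbeats 1000000
namespace GpAux

section DihedralLift
variable {G : Type*} [Group G] {n : ℕ} [NeZero n]

lemma pow_val_add (u : G) (hu : u ^ n = 1) (i j : ZMod n) :
    u ^ (i + j).val = u ^ i.val * u ^ j.val := by
  rw [ZMod.val_add, ← pow_add]
  exact (pow_eq_pow_mod _ hu).symm

lemma pow_val_sub (u : G) (hu : u ^ n = 1) (i j : ZMod n) :
    u ^ (j - i).val = u ^ j.val * (u ^ i.val)⁻¹ := by
  have h := pow_val_add u hu (j - i) i
  rw [sub_add_cancel] at h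
  rw [eq_mul_inv_iff_mul_eq, ← h]

lemma pow_mul_w {u w : G} (hw : w * w = 1) (hc : w * u * w⁻¹ = u⁻¹) (k : ℕ) :
    u ^ k * w = w * (u ^ k)⁻¹ := by
  have h1 : MulAut.conj w u = u⁻¹ := hc
  have h2 : MulAut.conj w (u ^ k) = (u ^ k)⁻¹ := by
    rw [map_pow, h1, inv_pow]
  rw [MulAut.conj_apply, inv_eq_of_mul_eq_one_right hw] at h2
  conv_rhs => rw [← h2]
  rw [← mul_assoc, ← mul_assoc, hw, one_mul]

/-- lift of data satisfying the dihedral relations to a hom from the dihedral group. -/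
def dihedralHom (u w : G) (hu : u ^ n = 1) (hw : w * w = 1) (hc : w * u * w⁻¹ = u⁻¹) :
    DihedralGroup n →* G where
  toFun x := x.casesOn (fun i => u ^ i.val) (fun i => w * u ^ i.val)
  map_one' := by
    show u ^ (0 : ZMod n).val = 1
    rw [ZMod.val_zero, pow_zero]
  map_mul' x y := by
    have comm : ∀ a b : ℕ, u ^ a * (u ^ b)⁻¹ = (u ^ b)⁻¹ * u ^ a := by
      intro a b
      exact (Commute.pow_pow_self u a b).inv_right
    rcases x with i | i <;> rcases y with j | j
    · show u ^ (i + j).val = u ^ i.val * u ^ j.val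
      exact pow_val_add u hu i j
    · show w * u ^ (j - i).val = u ^ i.val * (w * u ^ j.val)
      rw [pow_val_sub u hu, ← mul_assoc (u ^ i.val) w (u ^ j.val), pow_mul_w hw hc,
        mul_assoc w ((u ^ i.val)⁻¹) (u ^ j.val), comm]
    · show w * u ^ (i + j).val = w * u ^ i.val * u ^ j.val
      rw [pow_val_add u hu, mul_assoc]
    · show u ^ (j - i).val = w * u ^ i.val * (w * u ^ j.val)
      rw [mul_assoc w (u ^ i.val), ← mul_assoc (u ^ i.val) w (u ^ j.val), pow_mul_w hw hc,
        ← mul_assoc, ← mul_assoc, hw, one_mul, pow_val_sub u hu, comm]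

@[simp] lemma dihedralHom_r (u w : G) (hu : u ^ n = 1) (hw : w * w = 1)
    (hc : w * u * w⁻¹ = u⁻¹) (i : ZMod n) :
    dihedralHom u w hu hw hc (DihedralGroup.r i) = u ^ i.val := rfl

@[simp] lemma dihedralHom_sr (u w : G) (hu : u ^ n = 1) (hw : w * w = 1)
    (hc : w * u * w⁻¹ = u⁻¹) (i : ZMod n) :
    dihedralHom u w hu hw hc (DihedralGroup.sr i) = w * u ^ i.val := rfl

end DihedralLift

end GpAux
end
section
set_option linter.unusedSectionVars false
set_option maxHeartbeats 1000000
namespace GpAux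
variable {p : ℕ} [Fact p.Prime] {v : ZMod p}

lemma rot_transl (u : NormOne p v) (m : Multiplicative (ZMod p × ZMod p)) :
    rotHom u * translHom m = translHom (mu u m) * rotHom u := by
  have hu := u.2
  apply Gp_ext
  rw [Gp_mul_val, Gp_mul_val, rotHom_val, translHom_val, translHom_val,
    Lmat_mul (Or.inl rfl), Lmat_mul (Or.inl rfl)]
  refine Lmat_congr (by ring) (by ring) ?_ ?_ (by ring)
  · show _ = u.1.1 * (mu u m).toAdd.1 + u.1.2 * (mu u m).toAdd.2 + 1 * 0
    rw [mu_apply_fst, mu_apply_snd]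
    linear_combination (norm := ring_nf) (-m.toAdd.1) * hu
  · show _ = 1 * (v * u.1.2 * (mu u m).toAdd.1 + u.1.1 * (mu u m).toAdd.2) + 1 * 0
    rw [mu_apply_fst, mu_apply_snd]
    linear_combination (norm := ring_nf) (-m.toAdd.2) * hu

lemma refl_transl (m : Multiplicative (ZMod p × ZMod p)) :
    (reflG : Gp p v) * translHom m = translHom (sigmaAut m) * reflG := by
  apply Gp_ext
  rw [Gp_mul_val, Gp_mul_val, reflG_val, translHom_val, translHom_val,
    Lmat_mul (Or.inr rfl), Lmat_mul (Or.inl rfl)]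
  refine Lmat_congr (by ring) (by ring) ?_ ?_ (by ring)
  · show _ = 1 * (sigmaAut m).toAdd.1 + 0 * (sigmaAut m).toAdd.2 + 1 * 0
    rw [sigmaAut_apply_fst]
    ring
  · show _ = -1 * (v * 0 * (sigmaAut m).toAdd.1 + 1 * (sigmaAut m).toAdd.2) + 1 * 0
    rw [sigmaAut_apply_snd]
    ring

end GpAux
end
section
set_option linter.unusedSectionVars false
set_option maxHeartbeats 4000000
namespace GpAux
variable {p : ℕ} [Fact p.Prime] {v : ZMod p}

lemma Lmat_eq_one {a b c d s : ZMod p} (h : Lmat v a b c d s = 1) :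
    a = 1 ∧ b = 0 ∧ c = 0 ∧ d = 0 ∧ s = 1 := by
  rw [Lmat, Matrix.one_fin_three] at h
  have h' := fun i j => congrFun (congrFun h i) j
  exact ⟨by simpa using h' 0 0, by simpa using h' 1 0, by simpa using h' 2 0,
    by simpa using h' 2 1, by simpa using h' 2 2⟩

lemma translHom_injective : Function.Injective (translHom (p := p) (v := v)) := by
  intro m m' h
  have h2 : (((translHom m : Gp p v) : GL (Fin 3) (ZMod p)) : Matrix (Fin 3) (Fin 3) (ZMod p)) =
      (((translHom m' : Gp p v) : GL (Fin 3) (ZMod p)) : Matrix (Fin 3) (Fin 3) (ZMod p)) := by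
    rw [h]
  rw [translHom_val, translHom_val, Lmat, Lmat] at h2
  have h' := fun i j => congrFun (congrFun h2 i) j
  exact mequiv_ext (by simpa using h' 2 0) (by simpa using h' 2 1)

end GpAux
end

section
set_option linter.unusedSectionVars false
namespace GpAux
variable {p : ℕ} [Fact p.Prime] {v : ZMod p}

lemma orderOf_gen (hp : Odd p) (hv : ¬ IsSquare v) (u₀ : NormOne p v)
    (hg : ∀ x : NormOne p v, ∃ n : ℕ, u₀ ^ n = x) :
    orderOf u₀ = p + 1 := by
  rw [orderOf_eq_card_of_forall_mem_zpowers (fun x => by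
    obtain ⟨n, hn⟩ := hg x
    exact ⟨(n : ℤ), by simpa using hn⟩)]
  exact card_normOne hp hv

end GpAux
end

set_option maxHeartbeats 4000000
set_option linter.unusedSectionVars false
open GpAux

/-- For every odd prime `p` (with `v` a fixed non-square unit mod `p`, and `(a₀,b₀)` a
generator of the cyclic norm-one group `{(a,b) : a² − v b² = 1}`), the subgroup
`N = {L(1,0,c,d,1) : c,d ∈ ℤ/pℤ}` of `G_p` is a normal Sylow `p`-subgroup isomorphic
to `(ℤ/pℤ) × (ℤ/pℤ)`, and `G_p ≅ (ℤ/pℤ)² ⋊ D_{p+1}`, where the dihedral group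
`D_{p+1}` of order `2(p+1)` acts by the rotation `[[a₀, −b₀],[−v b₀, a₀]]` and the
reflection `diag(−1, 1)`. -/
theorem Gp_structure (p : ℕ) [Fact p.Prime] (hp : Odd p)
    (v : ZMod p) (hv : ¬ IsSquare v) (a₀ b₀ : ZMod p)
    (hab : a₀ ^ 2 - v * b₀ ^ 2 = 1)
    -- `(a₀, b₀)` generates the norm-one group under its multiplication
    (hgen : ∃ g : ℕ → ZMod p × ZMod p, g 0 = (1, 0) ∧
      (∀ n, g (n + 1) = (a₀ * (g n).1 + v * b₀ * (g n).2,
                         a₀ * (g n).2 + b₀ * (g n).1)) ∧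
      ∀ x : ZMod p × ZMod p, x.1 ^ 2 - v * x.2 ^ 2 = 1 → ∃ n, g n = x) :
    ∃ H : Subgroup (GL (Fin 3) (ZMod p)),
      -- `H` is the group `G_p` of matrices `L(a,b,c,d,s)`
      ((H : Set (GL (Fin 3) (ZMod p))) =
        {L : GL (Fin 3) (ZMod p) | ∃ a b c d s : ZMod p, a ^ 2 - v * b ^ 2 = 1 ∧ (s = 1 ∨ s = -1) ∧
          (L : Matrix (Fin 3) (Fin 3) (ZMod p)) =
            !![a, s * v * b, 0; b, s * a, 0; c, d, s]}) ∧
      ∃ N : Subgroup H,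
        -- `N` is the set of matrices `L(1,0,c,d,1)`
        ((N : Set H) = {L : H | ∃ c d : ZMod p,
          ((L : GL (Fin 3) (ZMod p)) : Matrix (Fin 3) (Fin 3) (ZMod p)) =
            !![1, 0, 0; 0, 1, 0; c, d, 1]}) ∧
        -- `N` is a normal Sylow `p`-subgroup of `G_p`
        N.Normal ∧ (∃ P : Sylow p H, (P : Subgroup H) = N) ∧
        -- `N ≅ (ℤ/pℤ) × (ℤ/pℤ)`
        Nonempty (N ≃* Multiplicative (ZMod p × ZMod p)) ∧
        -- `G_p ≅ (ℤ/pℤ)² ⋊ D_{p+1}` with the prescribed dihedral action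
        ∃ ψ : DihedralGroup (p + 1) →* MulAut (Multiplicative (ZMod p × ZMod p)),
          (∀ c d : ZMod p, ψ (DihedralGroup.r 1) (Multiplicative.ofAdd (c, d)) =
            Multiplicative.ofAdd (a₀ * c - b₀ * d, a₀ * d - v * b₀ * c)) ∧
          (∀ c d : ZMod p, ψ (DihedralGroup.sr 0) (Multiplicative.ofAdd (c, d)) =
            Multiplicative.ofAdd (-c, d)) ∧
          Nonempty (H ≃* Multiplicative (ZMod p × ZMod p) ⋊[ψ] DihedralGroup (p + 1)) := by
  classical
  haveI : Fact (1 < p + 1) := ⟨by have := (Fact.out : p.Prime).two_le; omega⟩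
  -- the generator of the norm-one group
  set u₀ : NormOne p v := ⟨(a₀, b₀), hab⟩ with hu₀
  have hgen' : ∀ x : NormOne p v, ∃ n : ℕ, u₀ ^ n = x := by
    obtain ⟨g, hg0, hgrec, hgsur⟩ := hgen
    have hg : ∀ n : ℕ, (u₀ ^ n : NormOne p v).1 = g n := by
      intro n
      induction n with
      | zero => rw [pow_zero, hg0]; rfl
      | succ n ih =>
        rw [hgrec n, ← ih, pow_succ]
        have e1 : u₀.1.1 = a₀ := rfl
        have e2 : u₀.1.2 = b₀ := rfl
        refine Prod.ext ?_ ?_ <;> simp only [NormOne.mul_fst, NormOne.mul_snd, e1, e2] <;> ring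
    intro x
    obtain ⟨n, hn⟩ := hgsur x.1 x.2
    exact ⟨n, Subtype.ext (by rw [hg n, hn])⟩
  have hord : orderOf u₀ = p + 1 := orderOf_gen hp hv u₀ hgen'
  have hu1 : u₀ ^ (p + 1) = 1 := by rw [← hord]; exact pow_orderOf_eq_one u₀
  have hmu1 : (mu u₀) ^ (p + 1) = 1 := by rw [← map_pow, hu1, _root_.map_one]
  have hrot1 : (rotHom u₀ : Gp p v) ^ (p + 1) = 1 := by rw [← map_pow, hu1, _root_.map_one]
  have hsiginv : (sigmaAut (p := p))⁻¹ = sigmaAut := inv_eq_of_mul_eq_one_right sigmaAut_sq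
  have hsigconj : sigmaAut * mu u₀ * (sigmaAut (p := p))⁻¹ = (mu u₀)⁻¹ := by
    rw [hsiginv, sigmaAut_mu_sigmaAut, map_inv]
  have hreflinv : (reflG : Gp p v)⁻¹ = reflG := inv_eq_of_mul_eq_one_right reflG_mul_self
  have hreflconj : reflG * (rotHom u₀ : Gp p v) * reflG⁻¹ = (rotHom u₀)⁻¹ := by
    rw [hreflinv, reflG_rot_reflG, map_inv]
  set ψ : DihedralGroup (p + 1) →* MulAut (Multiplicative (ZMod p × ZMod p)) :=
    dihedralHom (mu u₀) sigmaAut hmu1 sigmaAut_sq hsigconj with hψ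
  set f₂ : DihedralGroup (p + 1) →* Gp p v :=
    dihedralHom (rotHom u₀) reflG hrot1 reflG_mul_self hreflconj with hf₂
  have compat : ∀ g : DihedralGroup (p + 1),
      (translHom (p := p) (v := v)).comp (ψ g).toMonoidHom =
        (MulAut.conj (f₂ g)).toMonoidHom.comp translHom := by
    intro g
    refine MonoidHom.ext fun m => ?_
    simp only [MonoidHom.comp_apply, MulEquiv.coe_toMonoidHom, MulAut.conj_apply]
    rcases g with i | i
    · rw [hψ, hf₂, dihedralHom_r, dihedralHom_r, ← map_pow, ← map_pow,
        rot_transl (u₀ ^ i.val) m, mul_inv_cancel_right]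
    · rw [hψ, hf₂, dihedralHom_sr, dihedralHom_sr, ← map_pow, ← map_pow, MulAut.mul_apply]
      rw [eq_comm]
      calc (reflG * rotHom (u₀ ^ i.val)) * translHom m *
            (reflG * (rotHom (u₀ ^ i.val) : Gp p v))⁻¹
          = reflG * (rotHom (u₀ ^ i.val) * translHom m * (rotHom (u₀ ^ i.val))⁻¹) * reflG⁻¹ := by
            group
        _ = reflG * translHom (mu (u₀ ^ i.val) m) * reflG := by
            rw [rot_transl (u₀ ^ i.val) m, mul_inv_cancel_right, hreflinv]
        _ = translHom (sigmaAut (mu (u₀ ^ i.val) m)) * reflG * reflG := by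
            rw [refl_transl]
        _ = translHom (sigmaAut (mu (u₀ ^ i.val) m)) := by
            rw [mul_assoc, reflG_mul_self, mul_one]
  set Φ : Multiplicative (ZMod p × ZMod p) ⋊[ψ] DihedralGroup (p + 1) →* Gp p v :=
    SemidirectProduct.lift translHom f₂ compat with hΦ
  have hΦinj : Function.Injective Φ := by
    rw [injective_iff_map_eq_one]
    rintro ⟨m, x⟩ hx1
    have hdecomp : Φ ⟨m, x⟩ = translHom m * f₂ x := rfl
    rcases x with i | i
    · have h2 : translHom m * (rotHom (u₀ ^ i.val) : Gp p v) = 1 := by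
        rw [← hx1, hdecomp, hf₂, dihedralHom_r, map_pow]
      have hmat : Lmat v 1 0 m.toAdd.1 m.toAdd.2 1 *
          Lmat v (u₀ ^ i.val).1.1 (u₀ ^ i.val).1.2 0 0 1 = 1 := by
        have h3 := congrArg
          (fun z : Gp p v => ((z : GL (Fin 3) (ZMod p)) : Matrix (Fin 3) (Fin 3) (ZMod p))) h2
        simpa only [Gp_mul_val, translHom_val, rotHom_val, reflG_val, OneMemClass.coe_one,
          Units.val_one] using h3
      rw [Lmat_mul (Or.inl rfl)] at hmat
      obtain ⟨hA, hB, hC, hD, -⟩ := Lmat_eq_one hmat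
      have hA' : (u₀ ^ i.val).1.1 = 1 := by linear_combination hA
      have hB' : (u₀ ^ i.val).1.2 = 0 := by linear_combination hB
      have hm1 : m.toAdd.1 = 0 := by
        linear_combination hC - m.toAdd.1 * hA' - m.toAdd.2 * hB'
      have hm2 : m.toAdd.2 = 0 := by
        linear_combination hD - m.toAdd.2 * hA' - v * m.toAdd.1 * hB'
      have huiv : u₀ ^ i.val = 1 := NormOne.ext hA' hB'
      have hdvd : (p + 1) ∣ i.val := by
        have := orderOf_dvd_of_pow_eq_one huiv
        rwa [hord] at this
      have hi0 : i.val = 0 := Nat.eq_zero_of_dvd_of_lt hdvd (ZMod.val_lt i)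
      have hi : i = 0 := by rwa [ZMod.val_eq_zero] at hi0
      have hm : m = 1 := mequiv_ext hm1 hm2
      rw [hm, hi]
      rfl
    · exfalso
      have h2 : translHom m * ((reflG : Gp p v) * rotHom (u₀ ^ i.val)) = 1 := by
        rw [← hx1, hdecomp, hf₂, dihedralHom_sr, map_pow]
      have hmat : Lmat v 1 0 m.toAdd.1 m.toAdd.2 1 *
          (Lmat v 1 0 0 0 (-1) * Lmat v (u₀ ^ i.val).1.1 (u₀ ^ i.val).1.2 0 0 1) = 1 := by
        have h3 := congrArg
          (fun z : Gp p v => ((z : GL (Fin 3) (ZMod p)) : Matrix (Fin 3) (Fin 3) (ZMod p))) h2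
        simpa only [Gp_mul_val, translHom_val, rotHom_val, reflG_val, OneMemClass.coe_one,
          Units.val_one] using h3
      rw [Lmat_mul (Or.inr rfl), Lmat_mul (Or.inl rfl)] at hmat
      obtain ⟨-, -, -, -, hs⟩ := Lmat_eq_one hmat
      exact two_ne_zero hp (by linear_combination -hs)
  have hΦsurj : Function.Surjective Φ := by
    have key : ∀ (x : Gp p v) (a b c d : ZMod p) (ha : a ^ 2 - v * b ^ 2 = 1),
        ((x : GL (Fin 3) (ZMod p)) : Matrix (Fin 3) (Fin 3) (ZMod p)) = Lmat v a b c d 1 →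
        ∃ y, Φ y = x := by
      intro x a b c d ha hx
      obtain ⟨n, hn⟩ := hgen' ⟨(a, b), ha⟩
      have hfr : f₂ (DihedralGroup.r (n : ZMod (p + 1))) =
          rotHom (⟨(a, b), ha⟩ : NormOne p v) := by
        rw [hf₂, dihedralHom_r, ZMod.val_natCast, ← pow_eq_pow_mod n hrot1, ← map_pow, hn]
      refine ⟨⟨Multiplicative.ofAdd (a * c - b * d, a * d - v * b * c),
        DihedralGroup.r (n : ZMod (p + 1))⟩, ?_⟩
      have hΦy : Φ ⟨Multiplicative.ofAdd (a * c - b * d, a * d - v * b * c),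
          DihedralGroup.r (n : ZMod (p + 1))⟩ =
          translHom (Multiplicative.ofAdd (a * c - b * d, a * d - v * b * c)) *
            f₂ (DihedralGroup.r (n : ZMod (p + 1))) := rfl
      apply Gp_ext
      rw [hΦy, hfr, Gp_mul_val, translHom_val, hx]
      show Lmat v 1 0 (a * c - b * d) (a * d - v * b * c) 1 * Lmat v a b 0 0 1 = _
      rw [Lmat_mul (Or.inl rfl)]
      exact Lmat_congr (by ring) (by ring) (by linear_combination c * ha)
        (by linear_combination d * ha) (by ring)
    intro x
    obtain ⟨a, b, c, d, s, ha, hs, hx⟩ := x.2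
    rcases hs with rfl | rfl
    · exact key x a b c d ha hx
    · obtain ⟨y, hy⟩ := key (x * reflG) a b c (-d) ha (by
        rw [Gp_mul_val, reflG_val, hx]
        show Lmat v a b c d (-1) * Lmat v 1 0 0 0 (-1) = _
        rw [Lmat_mul (Or.inr rfl)]
        exact Lmat_congr (by ring) (by ring) (by ring) (by ring) (by ring))
      refine ⟨y * ⟨1, DihedralGroup.sr 0⟩, ?_⟩
      rw [_root_.map_mul, hy]
      have hsr : Φ (⟨1, DihedralGroup.sr 0⟩ :
          Multiplicative (ZMod p × ZMod p) ⋊[ψ] DihedralGroup (p + 1)) = reflG := by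
        show translHom 1 * f₂ (DihedralGroup.sr 0) = reflG
        rw [_root_.map_one, one_mul, hf₂, dihedralHom_sr, ZMod.val_zero, pow_zero, mul_one]
      rw [hsr, mul_assoc, reflG_mul_self, mul_one]
  set e : Multiplicative (ZMod p × ZMod p) ⋊[ψ] DihedralGroup (p + 1) ≃* Gp p v :=
    MulEquiv.ofBijective Φ ⟨hΦinj, hΦsurj⟩ with he
  refine ⟨Gp p v, rfl, (translHom (p := p) (v := v)).range, ?_, ?_, ?_, ?_, ψ, ?_, ?_, ⟨e.symm⟩⟩
  · ext x
    simp only [SetLike.mem_coe, MonoidHom.mem_range, Set.mem_setOf_eq]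
    constructor
    · rintro ⟨m, rfl⟩
      refine ⟨m.toAdd.1, m.toAdd.2, ?_⟩
      rw [translHom_val, Lmat]
      norm_num
    · rintro ⟨c, d, hL⟩
      refine ⟨Multiplicative.ofAdd (c, d), ?_⟩
      apply Gp_ext
      rw [translHom_val, hL, Lmat]
      norm_num
  · have hker : (translHom (p := p) (v := v)).range =
        (SemidirectProduct.rightHom.comp e.symm.toMonoidHom).ker := by
      ext x
      simp only [MonoidHom.mem_range, MonoidHom.mem_ker, MonoidHom.comp_apply,
        MulEquiv.coe_toMonoidHom]
      constructor
      · rintro ⟨m, rfl⟩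
        have h1 : e.symm (translHom m) = SemidirectProduct.inl m := by
          rw [MulEquiv.symm_apply_eq]
          show translHom m = Φ (SemidirectProduct.inl m)
          rw [hΦ, SemidirectProduct.lift_inl]
        rw [h1, SemidirectProduct.rightHom_inl]
      · intro hx
        refine ⟨(e.symm x).left, ?_⟩
        have h2 : Φ (e.symm x) = x := e.apply_symm_apply x
        conv_rhs => rw [← h2]
        show translHom (e.symm x).left = Φ (e.symm x)
        have h3 : Φ (e.symm x) = translHom (e.symm x).left * f₂ (e.symm x).right := rfl
        have h4 : (e.symm x).right = 1 := hx
        rw [h3, h4, _root_.map_one, mul_one]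
    rw [hker]
    exact MonoidHom.normal_ker _
  · have cardG : Nat.card (Gp p v) = p ^ 2 * (2 * (p + 1)) := by
      rw [← Nat.card_congr e.toEquiv]
      have e2 : (Multiplicative (ZMod p × ZMod p) ⋊[ψ] DihedralGroup (p + 1)) ≃
          Multiplicative (ZMod p × ZMod p) × DihedralGroup (p + 1) :=
        ⟨fun z => (z.left, z.right), fun q => ⟨q.1, q.2⟩, fun z => rfl, fun q => rfl⟩
      rw [Nat.card_congr e2, Nat.card_prod, Nat.card_congr Multiplicative.toAdd,
        Nat.card_prod, Nat.card_zmod, Nat.card_eq_fintype_card, DihedralGroup.card]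
      ring
    have cardN : Nat.card (translHom (p := p) (v := v)).range = p ^ 2 := by
      rw [← Nat.card_congr (MonoidHom.ofInjective translHom_injective).toEquiv,
        Nat.card_congr Multiplicative.toAdd, Nat.card_prod, Nat.card_zmod]
      ring
    have hpdvd : ¬ p ∣ 2 * (p + 1) := by
      intro h
      rcases (Nat.Prime.dvd_mul Fact.out).mp h with h | h
      · have h2 := (Nat.prime_dvd_prime_iff_eq Fact.out Nat.prime_two).mp h
        subst h2
        exact (Nat.not_odd_iff_even.mpr even_two) hp
      · have h3 : p ∣ 1 := by
          have := Nat.dvd_sub h (dvd_refl p)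
          simpa using this
        exact (Fact.out : p.Prime).one_lt.ne' (Nat.dvd_one.mp h3)
    have hfact : (Nat.card (Gp p v)).factorization p = 2 := by
      have hp0 : p ≠ 0 := (Fact.out : p.Prime).pos.ne'
      rw [cardG, Nat.factorization_mul (by positivity) (by positivity),
        Nat.Prime.factorization_pow Fact.out, Finsupp.add_apply, Finsupp.single_eq_same,
        Nat.factorization_eq_zero_of_not_dvd hpdvd]
    exact ⟨Sylow.ofCard _ (by rw [hfact]; exact cardN), rfl⟩
  · -- N ≃* (ZMod p)²
    exact ⟨(MonoidHom.ofInjective translHom_injective).symm⟩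
  · intro c d
    rw [hψ, dihedralHom_r, ZMod.val_one (p + 1), pow_one]
    rfl
  · intro c d
    rw [hψ, dihedralHom_sr, ZMod.val_zero, pow_zero, mul_one]
    rfl
end
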